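/- Assume Assumption (σ) and let b : ℝ^d → ℝ^d be bounded continuous. Let γ ∈ (0,1) with 1+γ > α, let κ > 0, let f : ℝ^d → ℝ be bounded continuous, and suppose u ∈ C_b^{1+γ}(ℝ^d) satisfies κu(x) − L^α u(x) = f(x) for all x ∈ ℝ^d. Then κ‖u‖₀ ≤ ‖f‖₀. -/

import Mathlib

open MeasureTheory Metric

noncomputable section

abbrev Ed (d : ℕ) := EuclideanSpace ℝ (Fin d)

def supNorm {d : ℕ} {F : Type*} [NormedAddCommGroup F] (f : Ed d → F) : ℝ := ⨆ x, ‖f x‖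

def hSemi {d : ℕ} {F : Type*} [NormedAddCommGroup F] (θ : ℝ) (f : Ed d → F) : ℝ :=
  sInf {M | 0 ≤ M ∧ ∀ x y, ‖f x - f y‖ ≤ M * ‖x - y‖ ^ θ}

def IsPeriodic {d : ℕ} {F : Type*} (f : Ed d → F) : Prop :=
  ∀ (x : Ed d) (k : Fin d → ℤ),
    f (x + (EuclideanSpace.equiv (Fin d) ℝ).symm (fun i => (k i : ℝ))) = f x

structure SigmaHyp (d : ℕ) (σ : Ed d → Ed d → Ed d) (Cσ : ℝ) (φ : Ed d → ℝ) : Prop where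
  hC : 0 < Cσ
  smooth : ∀ x, ContDiff ℝ 2 (σ x)
  lipschitz : ∀ x₁ x₂ y, ‖σ x₁ y - σ x₂ y‖ ≤ Cσ * ‖x₁ - x₂‖ * ‖y‖
  odd : ∀ x y, σ x (-y) = -σ x y
  jacobian : ∀ x y, ∃ L : Ed d ≃L[ℝ] Ed d,
    (L : Ed d →L[ℝ] Ed d) = fderiv ℝ (σ x) y ∧ ‖(L.symm : Ed d →L[ℝ] Ed d)‖ ≤ Cσ
  phi_meas : Measurable φ
  phi_pos : ∀ x, 0 < φ x
  phi_bdd : ∃ M, ∀ x, φ x ≤ M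
  growth_lower : ∀ x y, (φ x)⁻¹ * ‖y‖ ≤ ‖σ x y‖
  growth_upper : ∀ x y, ‖σ x y‖ ≤ φ x * ‖y‖

/-- The nonlocal operator
`L^α u(x) = ∫_{ℝ^d∖{0}} [u(x+σ(x,y)) − u(x) − 1_B(y) σ(x,y)·∇u(x)] ν^α(dy) + b(x)·∇u(x)`. -/
def Lalpha (d : ℕ) (α : ℝ) (σ : Ed d → Ed d → Ed d) (b : Ed d → Ed d)
    (u : Ed d → ℝ) (x : Ed d) : ℝ :=
  (∫ y in {y : Ed d | y ≠ 0},
      ‖y‖ ^ (-((d : ℝ) + α)) •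
        (u (x + σ x y) - u x -
          Set.indicator (ball (0 : Ed d) 1) (fun y' => fderiv ℝ u x (σ x y')) y)) +
    fderiv ℝ u x (b x)



lemma meas_norm_rpow (d : ℕ) (p : ℝ) : Measurable fun y : Ed d => ‖y‖ ^ p := by
  classical
  have h : (fun y : Ed d => ‖y‖ ^ p)
      = fun y => if y = (0 : Ed d) then (0:ℝ) ^ p else Real.exp (Real.log ‖y‖ * p) := by
    funext y
    by_cases hy : y = 0
    · simp [hy]
    · rw [if_neg hy, Real.rpow_def_of_pos (norm_pos_iff.mpr hy)]
  rw [h]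
  exact Measurable.ite (MeasurableSet.singleton 0)
    measurable_const
    (Real.measurable_exp.comp (Measurable.mul (Real.measurable_log.comp measurable_norm) measurable_const))

lemma ann_meas (d : ℕ) (a b : ℝ) : MeasurableSet {y : Ed d | a ≤ ‖y‖ ∧ ‖y‖ < b} := by
  apply MeasurableSet.inter
  · exact measurable_norm measurableSet_Ici
  · exact measurable_norm measurableSet_Iio

lemma vol_ball_toReal (d : ℕ) (hd : 1 ≤ d) {r : ℝ} (hr : 0 ≤ r) :
    (volume (ball (0 : Ed d) r)).toReal = r ^ d * (volume (ball (0 : Ed d) 1)).toReal := by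
  haveI : Nonempty (Fin d) := ⟨⟨0, hd⟩⟩
  rw [Measure.addHaar_ball volume (0 : Ed d) hr, ENNReal.toReal_mul, ENNReal.toReal_ofReal
    (by positivity), finrank_euclideanSpace_fin]

lemma ann_intOn (d : ℕ) {p a b : ℝ} (ha : 0 < a) (hp : p ≤ 0) :
    IntegrableOn (fun y : Ed d => ‖y‖ ^ p) {y : Ed d | a ≤ ‖y‖ ∧ ‖y‖ < b} ∧
    ∫ y in {y : Ed d | a ≤ ‖y‖ ∧ ‖y‖ < b}, ‖(‖y‖ ^ p)‖
      ≤ a ^ p * (volume (ball (0 : Ed d) b)).toReal := by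
  set s := {y : Ed d | a ≤ ‖y‖ ∧ ‖y‖ < b} with hs
  have hsub : s ⊆ ball (0 : Ed d) b := fun y hy => by
    simpa [mem_ball_zero_iff] using hy.2
  have hfin : volume s < ⊤ := lt_of_le_of_lt (measure_mono hsub) measure_ball_lt_top
  have hbound : ∀ y ∈ s, ‖(‖y‖ ^ p)‖ ≤ a ^ p := by
    intro y hy
    rw [Real.norm_eq_abs, abs_of_nonneg (Real.rpow_nonneg (norm_nonneg _) _)]
    exact Real.rpow_le_rpow_of_nonpos ha hy.1 hp
  have hint : IntegrableOn (fun y : Ed d => ‖y‖ ^ p) s volume := by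
    refine Measure.integrableOn_of_bounded (M := a ^ p) hfin.ne
      (meas_norm_rpow d p).aestronglyMeasurable ?_
    exact (ae_restrict_iff' (ann_meas d a b)).2 (Filter.Eventually.of_forall hbound)
  refine ⟨hint, ?_⟩
  have h2 : ‖∫ y in s, ‖(‖y‖ ^ p)‖‖ ≤ a ^ p * (volume s).toReal := by
    refine norm_setIntegral_le_of_norm_le_const hfin (fun y hy => ?_)
    · rw [norm_norm]; exact hbound y hy
  calc ∫ y in s, ‖(‖y‖ ^ p)‖ ≤ ‖∫ y in s, ‖(‖y‖ ^ p)‖‖ := le_abs_self _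
    _ ≤ a ^ p * (volume s).toReal := h2
    _ ≤ a ^ p * (volume (ball (0 : Ed d) b)).toReal := by
        refine mul_le_mul_of_nonneg_left ?_ (Real.rpow_nonneg ha.le _)
        exact ENNReal.toReal_mono measure_ball_lt_top.ne (measure_mono hsub)

-- interior and exterior integrability
variable {d : ℕ}

lemma intOn_ball (d : ℕ) (hd : 1 ≤ d) {p : ℝ} (hdp : -(d:ℝ) < p) (hp : p ≤ 0) :
    IntegrableOn (fun y : Ed d => ‖y‖ ^ p) (ball (0:Ed d) 1 \ {0}) := by
  set r : ℝ := (2:ℝ)⁻¹ with hrdef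
  have hr0 : (0:ℝ) < r := by norm_num
  have hr1 : r < 1 := by norm_num
  set V : ℝ := (volume (ball (0 : Ed d) 1)).toReal with hV
  set A : ℕ → Set (Ed d) := fun n => {y | r ^ ((n:ℝ)+1) ≤ ‖y‖ ∧ ‖y‖ < r ^ (n:ℝ)} with hA
  have hU : ball (0:Ed d) 1 \ {0} = ⋃ n, A n := by
    ext y
    simp only [Set.mem_diff, mem_ball_zero_iff, Set.mem_singleton_iff, Set.mem_iUnion, hA,
      Set.mem_setOf_eq]
    constructor
    · rintro ⟨hy1, hy2⟩
      have hy0 : 0 < ‖y‖ := norm_pos_iff.mpr hy2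
      obtain ⟨k, hk⟩ := exists_pow_lt_of_lt_one hy0 hr1
      have hex : ∃ n : ℕ, r ^ ((n:ℝ)+1) ≤ ‖y‖ := by
        refine ⟨k, ?_⟩
        have : r ^ ((k:ℝ)+1) ≤ r ^ (k:ℝ) :=
          Real.rpow_le_rpow_of_exponent_ge hr0 hr1.le (by linarith)
        rw [Real.rpow_natCast] at this
        exact this.trans hk.le
      refine ⟨Nat.find hex, Nat.find_spec hex, ?_⟩
      rcases Nat.eq_zero_or_pos (Nat.find hex) with h0 | hpos
      · rw [h0]; simpa using hy1
      · obtain ⟨m, hm⟩ : ∃ m, Nat.find hex = m + 1 := ⟨Nat.find hex - 1, by omega⟩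
        have := Nat.find_min hex (m := m) (by omega)
        rw [hm]
        push_cast
        push_cast at this
        linarith [not_le.mp this]
    · rintro ⟨n, hn1, hn2⟩
      have h1 : r ^ ((n:ℝ)) ≤ 1 := by
        rw [show (1:ℝ) = r ^ (0:ℝ) by simp]
        exact Real.rpow_le_rpow_of_exponent_ge hr0 hr1.le (by positivity)
      refine ⟨lt_of_lt_of_le hn2 h1, ?_⟩
      intro h0
      rw [h0, norm_zero] at hn1
      exact absurd hn1 (not_le.mpr (Real.rpow_pos_of_pos hr0 _))
  rw [hU]
  refine integrableOn_iUnion_of_summable_integral_norm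
    (fun n => (ann_intOn d (Real.rpow_pos_of_pos hr0 _) hp).1) ?_
  have key : ∀ n : ℕ, ∫ y in A n, ‖(‖y‖ ^ p)‖
      ≤ (r ^ p * V) * (r ^ (p + (d:ℝ))) ^ n := by
    intro n
    have h1 := (ann_intOn d (p := p) (a := r ^ ((n:ℝ)+1)) (b := r ^ (n:ℝ))
      (Real.rpow_pos_of_pos hr0 _) hp).2
    have h2 : (volume (ball (0 : Ed d) (r ^ (n:ℝ)))).toReal = (r ^ ((n:ℝ)*d)) * V := by
      rw [vol_ball_toReal d hd (Real.rpow_nonneg hr0.le _), ← Real.rpow_natCast (r ^ ((n:ℝ))) d,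
        ← Real.rpow_mul hr0.le]
    have hadd : ∀ a b : ℝ, r ^ a * r ^ b = r ^ (a+b) := fun a b => (Real.rpow_add hr0 a b).symm
    have h3 : (r ^ ((n:ℝ)+1)) ^ p * ((r ^ ((n:ℝ)*d)) * V)
        = (r ^ p * V) * (r ^ (p + (d:ℝ))) ^ n := by
      rw [← Real.rpow_mul hr0.le]
      calc r ^ (((n:ℝ)+1) * p) * (r ^ ((n:ℝ) * d) * V)
          = r ^ (((n:ℝ)+1) * p + (n:ℝ) * d) * V := by rw [← mul_assoc, hadd]
        _ = r ^ (p + (p + (d:ℝ)) * (n:ℝ)) * V := by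
            rw [show ((n:ℝ)+1) * p + (n:ℝ) * d = p + (p + (d:ℝ)) * (n:ℝ) by ring]
        _ = r ^ p * r ^ ((p + (d:ℝ)) * (n:ℝ)) * V := by rw [hadd]
        _ = (r ^ p * V) * (r ^ (p + (d:ℝ))) ^ n := by
            rw [← Real.rpow_natCast (r ^ (p + (d:ℝ))) n, ← Real.rpow_mul hr0.le]
            ring
    calc ∫ y in A n, ‖(‖y‖ ^ p)‖
        ≤ (r ^ ((n:ℝ)+1)) ^ p * (volume (ball (0 : Ed d) (r ^ (n:ℝ)))).toReal := h1
      _ = (r ^ p * V) * (r ^ (p + (d:ℝ))) ^ n := by rw [h2, h3]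
  refine Summable.of_nonneg_of_le
    (fun n => setIntegral_nonneg (ann_meas d _ _) (fun y _ => norm_nonneg _)) key ?_
  refine Summable.mul_left _ (summable_geometric_of_lt_one (Real.rpow_nonneg hr0.le _) ?_)
  exact Real.rpow_lt_one hr0.le hr1 (by linarith)

lemma intOn_ext (d : ℕ) (hd : 1 ≤ d) {p : ℝ} (hdp : p < -(d:ℝ)) {ρ : ℝ} (hρ : 0 < ρ) :
    IntegrableOn (fun y : Ed d => ‖y‖ ^ p) {y : Ed d | ρ ≤ ‖y‖} := by
  have hp : p ≤ 0 := by
    have : (0:ℝ) ≤ d := Nat.cast_nonneg d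
    linarith
  set V : ℝ := (volume (ball (0 : Ed d) 1)).toReal with hV
  set A : ℕ → Set (Ed d) := fun n => {y | ρ * 2 ^ ((n:ℝ)) ≤ ‖y‖ ∧ ‖y‖ < ρ * 2 ^ ((n:ℝ)+1)}
    with hA
  have h2pos : ∀ q : ℝ, (0:ℝ) < 2 ^ q := fun q => Real.rpow_pos_of_pos (by norm_num) q
  have hU : {y : Ed d | ρ ≤ ‖y‖} = ⋃ n, A n := by
    ext y
    simp only [Set.mem_setOf_eq, Set.mem_iUnion, hA]
    constructor
    · intro hy
      have hex : ∃ n : ℕ, ‖y‖ < ρ * 2 ^ ((n:ℝ)+1) := by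
        obtain ⟨k, hk⟩ := pow_unbounded_of_one_lt (‖y‖ / ρ) (by norm_num : (1:ℝ) < 2)
        refine ⟨k, ?_⟩
        have hk' : ‖y‖ < ρ * 2 ^ (k:ℝ) := by
          rw [Real.rpow_natCast]
          rw [div_lt_iff₀ hρ] at hk
          linarith [hk]
        refine lt_of_lt_of_le hk' (mul_le_mul_of_nonneg_left ?_ hρ.le)
        exact Real.rpow_le_rpow_of_exponent_le (by norm_num) (by linarith)
      refine ⟨Nat.find hex, ?_, Nat.find_spec hex⟩
      rcases Nat.eq_zero_or_pos (Nat.find hex) with h0 | hpos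
      · rw [h0]; simpa using hy
      · obtain ⟨m, hm⟩ : ∃ m, Nat.find hex = m + 1 := ⟨Nat.find hex - 1, by omega⟩
        have := Nat.find_min hex (m := m) (by omega)
        rw [hm]
        push_cast
        push_cast at this
        linarith [not_lt.mp this]
    · rintro ⟨n, hn1, hn2⟩
      refine le_trans ?_ hn1
      nth_rewrite 1 [show ρ = ρ * 1 by ring]
      refine mul_le_mul_of_nonneg_left ?_ hρ.le
      rw [show (1:ℝ) = 2 ^ (0:ℝ) by simp]
      exact Real.rpow_le_rpow_of_exponent_le (by norm_num) (by positivity)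
  rw [hU]
  refine integrableOn_iUnion_of_summable_integral_norm
    (fun n => (ann_intOn d (by positivity) hp).1) ?_
  have key : ∀ n : ℕ, ∫ y in A n, ‖(‖y‖ ^ p)‖
      ≤ (ρ ^ p * (ρ * 2) ^ (d:ℝ) * V) * ((2:ℝ) ^ (p + (d:ℝ))) ^ n := by
    intro n
    have h1 := (ann_intOn d (p := p) (a := ρ * 2 ^ ((n:ℝ))) (b := ρ * 2 ^ ((n:ℝ)+1))
      (by positivity) hp).2
    have h2 : (volume (ball (0 : Ed d) (ρ * 2 ^ ((n:ℝ)+1)))).toReal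
        = (ρ * 2 ^ ((n:ℝ)+1)) ^ ((d:ℕ)) * V := by
      rw [vol_ball_toReal d hd (by positivity)]
    have hadd : ∀ a b : ℝ, (2:ℝ) ^ a * (2:ℝ) ^ b = (2:ℝ) ^ (a+b) :=
      fun a b => (Real.rpow_add (by norm_num) a b).symm
    have h3 : (ρ * 2 ^ ((n:ℝ))) ^ p * ((ρ * 2 ^ ((n:ℝ)+1)) ^ ((d:ℕ)) * V)
        = (ρ ^ p * (ρ * 2) ^ (d:ℝ) * V) * ((2:ℝ) ^ (p + (d:ℝ))) ^ n := by
      have a1 : (ρ * 2 ^ ((n:ℝ))) ^ p = ρ ^ p * 2 ^ ((n:ℝ) * p) := by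
        rw [Real.mul_rpow hρ.le (h2pos _).le, ← Real.rpow_mul (by norm_num : (0:ℝ) ≤ 2)]
      have a2 : (ρ * 2 ^ ((n:ℝ)+1)) ^ ((d:ℕ)) = ρ ^ ((d:ℝ)) * 2 ^ (((n:ℝ)+1) * (d:ℝ)) := by
        rw [← Real.rpow_natCast (ρ * 2 ^ ((n:ℝ)+1)) d, Real.mul_rpow hρ.le (h2pos _).le,
          ← Real.rpow_mul (by norm_num : (0:ℝ) ≤ 2)]
      have a3 : (ρ * 2) ^ (d:ℝ) = ρ ^ ((d:ℝ)) * 2 ^ ((d:ℝ)) :=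
        Real.mul_rpow hρ.le (by norm_num)
      have a4 : ((2:ℝ) ^ (p + (d:ℝ))) ^ n = 2 ^ ((p + (d:ℝ)) * (n:ℝ)) := by
        rw [← Real.rpow_natCast ((2:ℝ) ^ (p + (d:ℝ))) n, ← Real.rpow_mul (by norm_num : (0:ℝ) ≤ 2)]
      rw [a1, a2, a3, a4]
      have a5 : (2:ℝ) ^ ((n:ℝ) * p) * 2 ^ (((n:ℝ)+1) * (d:ℝ))
          = 2 ^ ((d:ℝ)) * 2 ^ ((p + (d:ℝ)) * (n:ℝ)) := by
        rw [hadd, hadd, show (n:ℝ) * p + ((n:ℝ)+1) * (d:ℝ) = (d:ℝ) + (p + (d:ℝ)) * (n:ℝ) by ring]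
      calc ρ ^ p * 2 ^ ((n:ℝ) * p) * (ρ ^ ((d:ℝ)) * 2 ^ (((n:ℝ)+1) * (d:ℝ)) * V)
          = ρ ^ p * ρ ^ ((d:ℝ)) * V * (2 ^ ((n:ℝ) * p) * 2 ^ (((n:ℝ)+1) * (d:ℝ))) := by ring
        _ = ρ ^ p * ρ ^ ((d:ℝ)) * V * (2 ^ ((d:ℝ)) * 2 ^ ((p + (d:ℝ)) * (n:ℝ))) := by rw [a5]
        _ = ρ ^ p * (ρ ^ ((d:ℝ)) * 2 ^ ((d:ℝ))) * V * 2 ^ ((p + (d:ℝ)) * (n:ℝ)) := by ring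
    calc ∫ y in A n, ‖(‖y‖ ^ p)‖
        ≤ (ρ * 2 ^ ((n:ℝ))) ^ p * (volume (ball (0 : Ed d) (ρ * 2 ^ ((n:ℝ)+1)))).toReal := h1
      _ = (ρ ^ p * (ρ * 2) ^ (d:ℝ) * V) * ((2:ℝ) ^ (p + (d:ℝ))) ^ n := by rw [h2, h3]
  refine Summable.of_nonneg_of_le
    (fun n => setIntegral_nonneg (ann_meas d _ _) (fun y _ => norm_nonneg _)) key ?_
  refine Summable.mul_left _ (summable_geometric_of_lt_one (Real.rpow_nonneg (by norm_num) _) ?_)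
  exact Real.rpow_lt_one_of_one_lt_of_neg (by norm_num) (by linarith)

lemma taylor_bound {d : ℕ} {γ M₂ : ℝ} {u : Ed d → ℝ} (hu : ContDiff ℝ 1 u) (hγ0 : 0 < γ)
    (hM2 : 0 ≤ M₂) (hu2 : ∀ x y, ‖fderiv ℝ u x - fderiv ℝ u y‖ ≤ M₂ * ‖x - y‖ ^ γ)
    (x h : Ed d) : |u (x + h) - u x - fderiv ℝ u x h| ≤ M₂ * ‖h‖ ^ (1 + γ) := by
  by_cases hh : h = 0
  · simp [hh, Real.zero_rpow (by positivity : (1:ℝ) + γ ≠ 0)]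
  have hhn : 0 < ‖h‖ := norm_pos_iff.mpr hh
  set L := fderiv ℝ u x with hL
  set g : Ed d → ℝ := fun z => u z - L z with hg
  have key : ‖g (x + h) - g x‖ ≤ (M₂ * ‖h‖ ^ γ) * ‖(x + h) - x‖ := by
    refine Convex.norm_image_sub_le_of_norm_hasFDerivWithin_le
      (f' := fun z => fderiv ℝ u z - L) (s := closedBall x ‖h‖)
      (fun z _ => ((hu.differentiable one_ne_zero z).hasFDerivAt.sub L.hasFDerivAt).hasFDerivWithinAt)
      (fun z hz => ?_) (convex_closedBall _ _) (mem_closedBall_self hhn.le) ?_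
    · refine (hu2 z x).trans (mul_le_mul_of_nonneg_left ?_ hM2)
      refine Real.rpow_le_rpow (norm_nonneg _) ?_ hγ0.le
      simpa [dist_eq_norm] using hz
    · simp [mem_closedBall, dist_eq_norm]
  have hgx : g (x + h) - g x = u (x + h) - u x - L h := by
    simp only [hg, map_add]
    ring
  rw [hgx] at key
  have hnorm : ‖(x + h) - x‖ = ‖h‖ := by simp
  rw [hnorm] at key
  rw [← Real.norm_eq_abs]
  calc ‖u (x + h) - u x - L h‖ ≤ M₂ * ‖h‖ ^ γ * ‖h‖ := key
    _ = M₂ * ‖h‖ ^ (1 + γ) := by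
        rw [Real.rpow_add hhn, Real.rpow_one]; ring

lemma grad_small {d : ℕ} {γ M₂ : ℝ} {u : Ed d → ℝ} (hu : ContDiff ℝ 1 u) (hγ0 : 0 < γ)
    (hM2 : 0 ≤ M₂) (hu2 : ∀ x y, ‖fderiv ℝ u x - fderiv ℝ u y‖ ≤ M₂ * ‖x - y‖ ^ γ)
    {x : Ed d} {ε : ℝ} (hε : 0 < ε) (hmax : ∀ z, u z ≤ u x + ε) {t : ℝ} (ht : 0 < t) :
    ‖fderiv ℝ u x‖ ≤ ε / t + M₂ * t ^ γ := by
  refine le_of_forall_pos_le_add fun θ hθ => ?_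
  set L := fderiv ℝ u x with hLdef
  by_cases hL : ‖L‖ ≤ θ
  · have : (0:ℝ) ≤ ε / t + M₂ * t ^ γ := by positivity
    linarith
  push_neg at hL
  obtain ⟨v, hv1, hv2⟩ := L.exists_lt_apply_of_lt_opNorm (show ‖L‖ - θ < ‖L‖ by linarith)
  set w : Ed d := if 0 ≤ L v then v else -v with hw
  have hw1 : ‖w‖ ≤ 1 := by
    rcases le_or_gt 0 (L v) with hc | hc
    · rw [hw, if_pos hc]; exact hv1.le
    · rw [hw, if_neg (not_le.mpr hc), norm_neg]; exact hv1.le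
  have hw2 : ‖L‖ - θ < L w := by
    rcases le_or_gt 0 (L v) with hc | hc
    · rw [hw, if_pos hc]
      calc ‖L‖ - θ < ‖L v‖ := hv2
        _ = L v := by rw [Real.norm_eq_abs, abs_of_nonneg hc]
    · rw [hw, if_neg (not_le.mpr hc), map_neg]
      calc ‖L‖ - θ < ‖L v‖ := hv2
        _ = -(L v) := by rw [Real.norm_eq_abs, abs_of_neg hc]
  have htay := taylor_bound hu hγ0 hM2 hu2 x (t • w)
  have hLh : L (t • w) = t * L w := by simp
  have hmax' : u (x + t • w) - u x ≤ ε := by linarith [hmax (x + t • w)]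
  have hnorm : ‖t • w‖ ≤ t := by
    rw [norm_smul, Real.norm_eq_abs, abs_of_pos ht]
    nlinarith
  have h1 : t * L w ≤ u (x + t • w) - u x + M₂ * ‖t • w‖ ^ (1 + γ) := by
    rw [← hLh]
    have := (abs_le.mp htay).1
    linarith
  have h2 : M₂ * ‖t • w‖ ^ (1 + γ) ≤ M₂ * t ^ (1 + γ) :=
    mul_le_mul_of_nonneg_left (Real.rpow_le_rpow (norm_nonneg _) hnorm (by positivity)) hM2
  have h3 : t * (‖L‖ - θ) ≤ ε + M₂ * (t * t ^ γ) := by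
    have ht4 : t ^ ((1:ℝ) + γ) = t * t ^ γ := by rw [Real.rpow_add ht, Real.rpow_one]
    nlinarith [mul_le_mul_of_nonneg_left hw2.le ht.le]
  have h6 : (‖L‖ - θ) * t ≤ (ε / t + M₂ * t ^ γ) * t := by
    rw [add_mul, div_mul_cancel₀ _ ht.ne']
    calc (‖L‖ - θ) * t = t * (‖L‖ - θ) := by ring
      _ ≤ ε + M₂ * (t * t ^ γ) := h3
      _ = ε + M₂ * t ^ γ * t := by ring
  have := le_of_mul_le_mul_right h6 ht
  linarith

lemma le_supNorm {d : ℕ} {F : Type*} [NormedAddCommGroup F] {f : Ed d → F} {M : ℝ}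
    (hM : ∀ x, ‖f x‖ ≤ M) (x : Ed d) : ‖f x‖ ≤ supNorm f := by
  have hb : BddAbove (Set.range fun z : Ed d => ‖f z‖) :=
    ⟨M, by rintro z ⟨x, rfl⟩; exact hM x⟩
  exact le_ciSup hb x

lemma ptwise₁ {d : ℕ} {α γ M₂ Φ : ℝ} (hM2 : 0 ≤ M₂) (hΦ : 0 ≤ Φ) (hγ0 : 0 < γ)
    {σx : Ed d → Ed d} {u : Ed d → ℝ} (hu : ContDiff ℝ 1 u)
    (hu2 : ∀ x y, ‖fderiv ℝ u x - fderiv ℝ u y‖ ≤ M₂ * ‖x - y‖ ^ γ)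
    (x : Ed d) (hσup : ∀ y, ‖σx y‖ ≤ Φ * ‖y‖)
    {y : Ed d} (hyb : y ∈ ball (0:Ed d) 1) (hy0 : y ≠ 0) :
    ‖(‖y‖ ^ (-((d:ℝ) + α))) • (u (x + σx y) - u x -
        Set.indicator (ball (0:Ed d) 1) (fun y' => fderiv ℝ u x (σx y')) y)‖
      ≤ M₂ * Φ ^ (1 + γ) * ‖y‖ ^ (1 + γ + -((d:ℝ) + α)) := by
  have hyn : 0 < ‖y‖ := norm_pos_iff.mpr hy0
  rw [Set.indicator_of_mem hyb, norm_smul]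
  have h1 : ‖(‖y‖ ^ (-((d:ℝ) + α)) : ℝ)‖ = ‖y‖ ^ (-((d:ℝ) + α)) := by
    rw [Real.norm_eq_abs, abs_of_nonneg (Real.rpow_nonneg (norm_nonneg _) _)]
  rw [h1]
  have h2 : ‖u (x + σx y) - u x - fderiv ℝ u x (σx y)‖ ≤ M₂ * (Φ * ‖y‖) ^ (1 + γ) := by
    refine le_trans ?_ (mul_le_mul_of_nonneg_left
      (Real.rpow_le_rpow (norm_nonneg _) (hσup y) (by positivity)) hM2)
    rw [Real.norm_eq_abs]
    exact taylor_bound hu hγ0 hM2 hu2 x (σx y)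
  calc ‖y‖ ^ (-((d:ℝ) + α)) * ‖u (x + σx y) - u x - fderiv ℝ u x (σx y)‖
      ≤ ‖y‖ ^ (-((d:ℝ) + α)) * (M₂ * (Φ * ‖y‖) ^ (1 + γ)) :=
        mul_le_mul_of_nonneg_left h2 (Real.rpow_nonneg (norm_nonneg _) _)
    _ = M₂ * Φ ^ (1 + γ) * ‖y‖ ^ (1 + γ + -((d:ℝ) + α)) := by
        rw [Real.mul_rpow hΦ (norm_nonneg _), Real.rpow_add hyn (1 + γ) (-((d:ℝ) + α))]
        ring

lemma ptwise₂ {d : ℕ} {α U : ℝ} {σx : Ed d → Ed d} {u : Ed d → ℝ}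
    (hU : ∀ z, |u z| ≤ U) (x : Ed d)
    {y : Ed d} (hyb : y ∉ ball (0:Ed d) 1) :
    ‖(‖y‖ ^ (-((d:ℝ) + α))) • (u (x + σx y) - u x -
        Set.indicator (ball (0:Ed d) 1) (fun y' => fderiv ℝ u x (σx y')) y)‖
      ≤ (2 * U) * ‖y‖ ^ (-((d:ℝ) + α)) := by
  rw [Set.indicator_of_notMem hyb, norm_smul, sub_zero]
  have h1 : ‖(‖y‖ ^ (-((d:ℝ) + α)) : ℝ)‖ = ‖y‖ ^ (-((d:ℝ) + α)) := by
    rw [Real.norm_eq_abs, abs_of_nonneg (Real.rpow_nonneg (norm_nonneg _) _)]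
  rw [h1]
  have h2 : ‖u (x + σx y) - u x‖ ≤ 2 * U := by
    calc ‖u (x + σx y) - u x‖ ≤ ‖u (x + σx y)‖ + ‖u x‖ := norm_sub_le _ _
      _ ≤ U + U := add_le_add (hU _) (hU _)
      _ = 2 * U := by ring
  calc ‖y‖ ^ (-((d:ℝ) + α)) * ‖u (x + σx y) - u x‖
      ≤ ‖y‖ ^ (-((d:ℝ) + α)) * (2 * U) :=
        mul_le_mul_of_nonneg_left h2 (Real.rpow_nonneg (norm_nonneg _) _)
    _ = (2 * U) * ‖y‖ ^ (-((d:ℝ) + α)) := by ring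

lemma split_ne_zero (d : ℕ) {ρ : ℝ} (hρ : 0 < ρ) :
    {y : Ed d | y ≠ 0} = (ball (0:Ed d) ρ \ {0}) ∪ {y : Ed d | ρ ≤ ‖y‖} := by
  ext y
  simp only [Set.mem_setOf_eq, Set.mem_union, Set.mem_diff, mem_ball_zero_iff,
    Set.mem_singleton_iff]
  constructor
  · intro hy
    rcases lt_or_ge ‖y‖ ρ with h | h
    · exact Or.inl ⟨h, hy⟩
    · exact Or.inr h
  · rintro (⟨-, hy⟩ | h)
    · exact hy
    · intro h0
      rw [h0, norm_zero] at h
      exact absurd h (not_le.mpr hρ)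

lemma integrand_meas (d : ℕ) (α : ℝ) {σx : Ed d → Ed d} (hσc : Continuous σx)
    {u : Ed d → ℝ} (hu : ContDiff ℝ 1 u) (x : Ed d) :
    Measurable (fun y : Ed d => (‖y‖ ^ (-((d:ℝ) + α))) • (u (x + σx y) - u x -
        Set.indicator (ball (0:Ed d) 1) (fun y' => fderiv ℝ u x (σx y')) y)) := by
  refine Measurable.smul (meas_norm_rpow d _) ?_
  refine Measurable.sub (Measurable.sub ?_ measurable_const) ?_
  · exact (hu.continuous.comp (continuous_const.add hσc)).measurable
  · exact Measurable.indicator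
      ((fderiv ℝ u x).continuous.comp hσc).measurable measurableSet_ball

lemma integrand_intOn (d : ℕ) (hd : 1 ≤ d) {α γ : ℝ}
    (hα1 : 1 < α) (hγ0 : 0 < γ) (hγ1 : γ < 1) (hγα : α < 1 + γ)
    {σx : Ed d → Ed d} (hσc : Continuous σx)
    {u : Ed d → ℝ} (hu : ContDiff ℝ 1 u)
    {M₂ : ℝ} (hM2 : 0 ≤ M₂) (hu2 : ∀ x y, ‖fderiv ℝ u x - fderiv ℝ u y‖ ≤ M₂ * ‖x - y‖ ^ γ)
    {U : ℝ} (hU : ∀ z, |u z| ≤ U)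
    (x : Ed d) {Φ : ℝ} (hΦ : 0 ≤ Φ) (hσup : ∀ y, ‖σx y‖ ≤ Φ * ‖y‖) :
    IntegrableOn (fun y : Ed d => (‖y‖ ^ (-((d:ℝ) + α))) • (u (x + σx y) - u x -
        Set.indicator (ball (0:Ed d) 1) (fun y' => fderiv ℝ u x (σx y')) y))
      {y : Ed d | y ≠ 0} := by
  have hd1 : (1:ℝ) ≤ (d:ℝ) := by exact_mod_cast hd
  rw [split_ne_zero d one_pos]
  have hmeas := integrand_meas d α hσc hu x
  refine IntegrableOn.union ?_ ?_
  · refine Integrable.mono'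
      (g := fun y : Ed d => (M₂ * Φ ^ (1 + γ)) * ‖y‖ ^ (1 + γ + -((d:ℝ) + α)))
      (Integrable.const_mul ?_ _) hmeas.aestronglyMeasurable ?_
    · exact intOn_ball d hd (by linarith) (by linarith)
    · refine (ae_restrict_iff' (measurableSet_ball.diff (measurableSet_singleton _))).2
        (Filter.Eventually.of_forall ?_)
      rintro y ⟨hyb, hy0⟩
      exact ptwise₁ hM2 hΦ hγ0 hu hu2 x hσup hyb hy0
  · refine Integrable.mono'
      (g := fun y : Ed d => (2 * U) * ‖y‖ ^ (-((d:ℝ) + α)))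
      (Integrable.const_mul ?_ _) hmeas.aestronglyMeasurable ?_
    · exact intOn_ext d hd (by linarith) one_pos
    · refine (ae_restrict_iff' (measurable_norm measurableSet_Ici)).2
        (Filter.Eventually.of_forall ?_)
      intro y hy
      have hyb : y ∉ ball (0:Ed d) 1 := by
        simp only [mem_ball_zero_iff, not_lt]
        exact hy
      exact ptwise₂ hU x hyb

lemma Lalpha_neg (d : ℕ) (α : ℝ) (σ : Ed d → Ed d → Ed d) (b : Ed d → Ed d)
    (u : Ed d → ℝ) (x : Ed d) :
    Lalpha d α σ b (fun z => -u z) x = -Lalpha d α σ b u x := by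
  unfold Lalpha
  rw [fderiv_fun_neg]
  have h1 : ∀ y : Ed d, (‖y‖ ^ (-((d:ℝ) + α))) • ((-u (x + σ x y)) - (-u x) -
      Set.indicator (ball (0:Ed d) 1) (fun y' => -(fderiv ℝ u x (σ x y'))) y)
      = -((‖y‖ ^ (-((d:ℝ) + α))) • (u (x + σ x y) - u x -
      Set.indicator (ball (0:Ed d) 1) (fun y' => fderiv ℝ u x (σ x y')) y)) := by
    intro y
    by_cases hy : y ∈ ball (0:Ed d) 1
    · simp only [Set.indicator_of_mem hy, smul_eq_mul]
      ring
    · simp only [Set.indicator_of_notMem hy, smul_eq_mul]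
      ring
  simp only [ContinuousLinearMap.neg_apply]
  simp only [h1]
  rw [integral_neg]
  ring

lemma exists_small_eps {γ M₂ Φ J Mb κ δ : ℝ} (hγ0 : 0 < γ) (hδ : 0 < δ) :
    ∃ ε : ℝ, 0 < ε ∧ κ * ε + (ε + Φ * (Real.sqrt ε + M₂ * ε ^ (γ/2))) * J
      + Mb * (Real.sqrt ε + M₂ * ε ^ (γ/2)) < δ := by
  set G : ℝ → ℝ := fun ε => Real.sqrt ε + M₂ * ε ^ (γ/2) with hG
  set E : ℝ → ℝ := fun ε => κ * ε + (ε + Φ * G ε) * J + Mb * G ε with hE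
  have hGt : Filter.Tendsto G (nhdsWithin 0 (Set.Ioi 0)) (nhds 0) := by
    have h1 : Filter.Tendsto (fun ε : ℝ => Real.sqrt ε) (nhds 0) (nhds 0) := by
      simpa using Real.continuous_sqrt.tendsto 0
    have h2 : Filter.Tendsto (fun ε : ℝ => ε ^ (γ/2)) (nhds 0) (nhds 0) := by
      have := (Real.continuousAt_rpow_const 0 (γ/2) (Or.inr (by positivity))).tendsto
      simpa [Real.zero_rpow (by positivity : γ/2 ≠ 0)] using this
    have h3 := h1.add (h2.const_mul M₂)
    rw [hG]
    simpa using h3.mono_left nhdsWithin_le_nhds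
  have hid : Filter.Tendsto (fun ε : ℝ => ε) (nhdsWithin 0 (Set.Ioi 0)) (nhds 0) :=
    Filter.tendsto_id.mono_left nhdsWithin_le_nhds
  have hEt : Filter.Tendsto E (nhdsWithin 0 (Set.Ioi 0)) (nhds 0) := by
    have := ((hid.const_mul κ).add ((hid.add (hGt.const_mul Φ)).mul_const J)).add
      (hGt.const_mul Mb)
    rw [hE]
    simpa using this
  have hev : ∀ᶠ ε in nhdsWithin 0 (Set.Ioi 0), E ε < δ := hEt.eventually_lt_const hδ
  obtain ⟨ε, hε1, hε2⟩ := (hev.and (eventually_mem_nhdsWithin)).exists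
  exact ⟨ε, hε2, hε1⟩

set_option maxHeartbeats 2000000 in
lemma key (d : ℕ) (hd : 1 ≤ d) {α : ℝ} (hα1 : 1 < α) (hα2 : α < 2)
    {σ : Ed d → Ed d → Ed d} (hσc : ∀ x, Continuous (σ x))
    {Φ : ℝ} (hΦ : 0 ≤ Φ) (hσup : ∀ x y, ‖σ x y‖ ≤ Φ * ‖y‖)
    {b : Ed d → Ed d} {Mb : ℝ} (hMb : 0 ≤ Mb) (hb : ∀ x, ‖b x‖ ≤ Mb)
    {γ : ℝ} (hγ0 : 0 < γ) (hγ1 : γ < 1) (hγα : α < 1 + γ)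
    {κ : ℝ} (hκ : 0 < κ)
    {f : Ed d → ℝ} {Mf : ℝ} (hf : ∀ x, |f x| ≤ Mf)
    {u : Ed d → ℝ} (hu : ContDiff ℝ 1 u) {U : ℝ} (hU : ∀ z, |u z| ≤ U)
    {M₂ : ℝ} (hM2 : 0 ≤ M₂) (hu2 : ∀ x y, ‖fderiv ℝ u x - fderiv ℝ u y‖ ≤ M₂ * ‖x - y‖ ^ γ)
    (hsol : ∀ x, κ * u x - Lalpha d α σ b u x = f x) :
    κ * (⨆ x, u x) ≤ supNorm f := by
  have hd1 : (1:ℝ) ≤ (d:ℝ) := by exact_mod_cast hd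
  have hbdd_u : BddAbove (Set.range u) :=
    ⟨U, by rintro z ⟨x, rfl⟩; exact (le_abs_self _).trans (hU x)⟩
  refine le_of_forall_pos_le_add fun δ hδ => ?_
  set c : ℝ := -((d:ℝ) + α) with hcdef
  set p₁ : ℝ := 1 + γ + -((d:ℝ) + α) with hp₁
  set S : ℕ → Set (Ed d) := fun k => ball (0:Ed d) (1/((k:ℝ)+1)) \ {0} with hSdef
  have hSmeas : ∀ k, MeasurableSet (S k) :=
    fun _ => measurableSet_ball.diff (measurableSet_singleton _)
  have hSsub : ∀ k, S k ⊆ ball (0:Ed d) 1 \ {0} := by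
    intro k y hy
    refine ⟨mem_ball_zero_iff.mpr (lt_of_lt_of_le (mem_ball_zero_iff.mp hy.1) ?_), hy.2⟩
    rw [div_le_one (by positivity)]
    have : (0:ℝ) ≤ (k:ℝ) := Nat.cast_nonneg k
    linarith
  have hg1 : IntegrableOn (fun y : Ed d => ‖y‖ ^ p₁) (ball (0:Ed d) 1 \ {0}) volume :=
    intOn_ball d hd (by rw [hp₁]; linarith) (by rw [hp₁]; linarith)
  set I : ℕ → ℝ := fun k => ∫ y in S k, ‖y‖ ^ p₁ with hIdef
  have hInter : ⋂ k, S k = (∅ : Set (Ed d)) := by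
    ext y
    simp only [Set.mem_iInter, Set.mem_empty_iff_false, iff_false]
    intro hall
    have hy0 : y ≠ 0 := (hall 0).2
    have hyn : 0 < ‖y‖ := norm_pos_iff.mpr hy0
    obtain ⟨k, hk⟩ := exists_nat_gt (1/‖y‖)
    have hmem := mem_ball_zero_iff.mp (hall k).1
    have hk0 : (0:ℝ) < (k:ℝ)+1 := by positivity
    have h1 : 1 < (k:ℝ) * ‖y‖ := by
      rw [div_lt_iff₀ hyn] at hk; linarith
    have h2 : ((k:ℝ)+1) * ‖y‖ < 1 := by
      rw [lt_div_iff₀ hk0] at hmem; linarith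
    nlinarith
  set μ' := volume.restrict (ball (0:Ed d) 1 \ {0}) with hμ'
  have hanti : Antitone S := by
    intro k l hkl
    refine Set.diff_subset_diff_left (ball_subset_ball ?_)
    have h1 : (0:ℝ) < (k:ℝ)+1 := by positivity
    have h2 : (k:ℝ) ≤ (l:ℝ) := by exact_mod_cast hkl
    exact one_div_le_one_div_of_le h1 (by linarith)
  have hμtend : Filter.Tendsto (fun k => μ' (S k)) Filter.atTop (nhds 0) := by
    have ht := tendsto_measure_iInter_atTop (μ := μ') (fun k => (hSmeas k).nullMeasurableSet)
      hanti ⟨0, ?_⟩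
    · rw [hInter, measure_empty] at ht
      exact ht
    · refine ne_of_lt (lt_of_le_of_lt (Measure.restrict_apply_le _ _) ?_)
      exact lt_of_le_of_lt (measure_mono Set.diff_subset) measure_ball_lt_top
  have hItend : Filter.Tendsto I Filter.atTop (nhds 0) := by
    have ht := hg1.tendsto_setIntegral_nhds_zero (l := Filter.atTop) (s := S) hμtend
    refine Filter.Tendsto.congr (fun k => ?_) ht
    rw [Measure.restrict_restrict (hSmeas k), Set.inter_eq_self_of_subset_left (hSsub k)]
  set C₁ : ℝ := M₂ * Φ ^ (1+γ) with hC₁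
  have hC₁0 : 0 ≤ C₁ := by positivity
  obtain ⟨m, hm⟩ : ∃ m, C₁ * I m < δ/2 := by
    have hev : ∀ᶠ k in Filter.atTop, I k < (δ/2)/(C₁+1) :=
      hItend.eventually_lt_const (by positivity)
    obtain ⟨m, hm⟩ := hev.exists
    refine ⟨m, ?_⟩
    have hI0 : 0 ≤ I m := setIntegral_nonneg (hSmeas m)
      (fun y _ => Real.rpow_nonneg (norm_nonneg _) _)
    have h1 : C₁ * I m ≤ C₁ * ((δ/2)/(C₁+1)) := mul_le_mul_of_nonneg_left hm.le hC₁0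
    have h2 : C₁ * ((δ/2)/(C₁+1)) < δ/2 := by
      rw [mul_div_assoc']
      rw [div_lt_iff₀ (by positivity)]
      nlinarith
    linarith
  set ρ : ℝ := 1/((m:ℝ)+1) with hρdef
  have hρ : 0 < ρ := by positivity
  have hJint : IntegrableOn (fun y : Ed d => ‖y‖ ^ c) {y : Ed d | ρ ≤ ‖y‖} volume :=
    intOn_ext d hd (by rw [hcdef]; linarith) hρ
  set J : ℝ := ∫ y in {y : Ed d | ρ ≤ ‖y‖}, ‖y‖ ^ c with hJdef
  have hJ0 : 0 ≤ J := setIntegral_nonneg (measurable_norm measurableSet_Ici)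
    (fun y _ => Real.rpow_nonneg (norm_nonneg _) _)
  obtain ⟨ε, hε, hEε⟩ := exists_small_eps (γ := γ) (M₂ := M₂) (Φ := Φ) (J := J)
    (Mb := Mb) (κ := κ) hγ0 (show (0:ℝ) < δ/2 by positivity)
  set G : ℝ := Real.sqrt ε + M₂ * ε ^ (γ/2) with hGdef
  have hG0 : 0 ≤ G := by
    rw [hGdef]; positivity
  obtain ⟨x, hx⟩ := exists_lt_of_lt_ciSup (show (⨆ z, u z) - ε < ⨆ z, u z from sub_lt_self _ hε)
  have hmax : ∀ z, u z ≤ u x + ε := fun z => le_trans (le_ciSup hbdd_u z) (by linarith)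
  have hgrad : ‖fderiv ℝ u x‖ ≤ G := by
    have h := grad_small hu hγ0 hM2 hu2 hε hmax (Real.sqrt_pos.mpr hε)
    rw [Real.div_sqrt] at h
    have h2 : Real.sqrt ε ^ γ = ε ^ (γ/2) := by
      rw [Real.sqrt_eq_rpow, ← Real.rpow_mul hε.le, show (1/2:ℝ)*γ = γ/2 from by ring]
    rw [h2] at h
    exact h
  set g₀ : ℝ := ‖fderiv ℝ u x‖ with hg₀
  have hg₀0 : 0 ≤ g₀ := norm_nonneg _
  set Fn : Ed d → ℝ := fun y => (‖y‖ ^ c) • (u (x + σ x y) - u x -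
      Set.indicator (ball (0:Ed d) 1) (fun y' => fderiv ℝ u x (σ x y')) y) with hFn
  have hint : IntegrableOn Fn {y : Ed d | y ≠ 0} volume :=
    integrand_intOn d hd hα1 hγ0 hγ1 hγα (hσc x) hu hM2 hu2 hU x hΦ (hσup x)
  have hsplit := split_ne_zero d (ρ := ρ) hρ
  have hintS : IntegrableOn Fn (ball (0:Ed d) ρ \ {0}) volume :=
    hint.mono_set (by rw [hsplit]; exact Set.subset_union_left)
  have hintT : IntegrableOn Fn {y : Ed d | ρ ≤ ‖y‖} volume :=
    hint.mono_set (by rw [hsplit]; exact Set.subset_union_right)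
  have hdisj : Disjoint (ball (0:Ed d) ρ \ {0}) {y : Ed d | ρ ≤ ‖y‖} := by
    rw [Set.disjoint_left]
    rintro y ⟨hy1, -⟩ hy2
    exact absurd (mem_ball_zero_iff.mp hy1) (not_lt.mpr hy2)
  have hdecomp : ∫ y in {y : Ed d | y ≠ 0}, Fn y
      = (∫ y in ball (0:Ed d) ρ \ {0}, Fn y) + ∫ y in {y : Ed d | ρ ≤ ‖y‖}, Fn y := by
    rw [hsplit]
    exact setIntegral_union hdisj (measurable_norm measurableSet_Ici) hintS hintT
  have hSm : S m = ball (0:Ed d) ρ \ {0} := rfl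
  have hboundS : (∫ y in ball (0:Ed d) ρ \ {0}, Fn y) ≤ C₁ * I m := by
    have h1 : (∫ y in ball (0:Ed d) ρ \ {0}, Fn y)
        ≤ ∫ y in ball (0:Ed d) ρ \ {0}, C₁ * ‖y‖ ^ p₁ := by
      refine setIntegral_mono_on hintS
        (((hg1.mono_set (hSm ▸ hSsub m))).const_mul _)
        (measurableSet_ball.diff (measurableSet_singleton _)) ?_
      rintro y ⟨hy1, hy2⟩
      have hy2' : y ≠ 0 := hy2
      have hyb : y ∈ ball (0:Ed d) 1 := (hSm ▸ hSsub m) ⟨hy1, hy2⟩ |>.1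
      calc Fn y ≤ |Fn y| := le_abs_self _
        _ = ‖Fn y‖ := (Real.norm_eq_abs _).symm
        _ ≤ C₁ * ‖y‖ ^ p₁ := ptwise₁ hM2 hΦ hγ0 hu hu2 x (hσup x) hyb hy2'
    calc (∫ y in ball (0:Ed d) ρ \ {0}, Fn y)
        ≤ ∫ y in ball (0:Ed d) ρ \ {0}, C₁ * ‖y‖ ^ p₁ := h1
      _ = C₁ * ∫ y in ball (0:Ed d) ρ \ {0}, ‖y‖ ^ p₁ := integral_const_mul _ _
      _ = C₁ * I m := by simp only [hIdef, hSm]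
  have hboundT : (∫ y in {y : Ed d | ρ ≤ ‖y‖}, Fn y) ≤ (ε + Φ * g₀) * J := by
    have h1 : ∀ y ∈ {y : Ed d | ρ ≤ ‖y‖}, Fn y ≤ (ε + Φ * g₀) * ‖y‖ ^ c := by
      intro y _
      have hA : u (x + σ x y) - u x -
          Set.indicator (ball (0:Ed d) 1) (fun y' => fderiv ℝ u x (σ x y')) y
          ≤ ε + Φ * g₀ := by
        have hu1 : u (x + σ x y) - u x ≤ ε := by linarith [hmax (x + σ x y)]
        by_cases hyb : y ∈ ball (0:Ed d) 1
        · rw [Set.indicator_of_mem hyb]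
          have habs : |fderiv ℝ u x (σ x y)| ≤ Φ * g₀ := by
            have hyn1 : ‖y‖ ≤ 1 := (mem_ball_zero_iff.mp hyb).le
            calc |fderiv ℝ u x (σ x y)| = ‖fderiv ℝ u x (σ x y)‖ := (Real.norm_eq_abs _).symm
              _ ≤ g₀ * ‖σ x y‖ := (fderiv ℝ u x).le_opNorm _
              _ ≤ g₀ * (Φ * ‖y‖) := mul_le_mul_of_nonneg_left (hσup x y) hg₀0
              _ ≤ g₀ * (Φ * 1) := by nlinarith [mul_nonneg hg₀0 hΦ]
              _ = Φ * g₀ := by ring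
          linarith [neg_abs_le (fderiv ℝ u x (σ x y))]
        · rw [Set.indicator_of_notMem hyb, sub_zero]
          have : 0 ≤ Φ * g₀ := mul_nonneg hΦ hg₀0
          linarith
      calc Fn y = ‖y‖ ^ c * (u (x + σ x y) - u x -
            Set.indicator (ball (0:Ed d) 1) (fun y' => fderiv ℝ u x (σ x y')) y) := by
            simp only [hFn, smul_eq_mul]
          _ ≤ ‖y‖ ^ c * (ε + Φ * g₀) :=
            mul_le_mul_of_nonneg_left hA (Real.rpow_nonneg (norm_nonneg _) _)
          _ = (ε + Φ * g₀) * ‖y‖ ^ c := by ring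
    calc (∫ y in {y : Ed d | ρ ≤ ‖y‖}, Fn y)
        ≤ ∫ y in {y : Ed d | ρ ≤ ‖y‖}, (ε + Φ * g₀) * ‖y‖ ^ c :=
          setIntegral_mono_on hintT (hJint.const_mul _)
            (measurable_norm measurableSet_Ici) h1
      _ = (ε + Φ * g₀) * J := by rw [integral_const_mul, hJdef]
  have hbterm : fderiv ℝ u x (b x) ≤ Mb * g₀ := by
    have h1 : ‖fderiv ℝ u x (b x)‖ ≤ g₀ * Mb :=
      le_trans ((fderiv ℝ u x).le_opNorm _) (mul_le_mul_of_nonneg_left (hb x) hg₀0)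
    calc fderiv ℝ u x (b x) ≤ |fderiv ℝ u x (b x)| := le_abs_self _
      _ = ‖fderiv ℝ u x (b x)‖ := (Real.norm_eq_abs _).symm
      _ ≤ g₀ * Mb := h1
      _ = Mb * g₀ := by ring
  have hLdef : Lalpha d α σ b u x = (∫ y in {y : Ed d | y ≠ 0}, Fn y) + fderiv ℝ u x (b x) :=
    rfl
  have hLx : Lalpha d α σ b u x ≤ C₁ * I m + ((ε + Φ * g₀) * J + Mb * g₀) := by
    rw [hLdef, hdecomp]
    linarith
  have hfx : f x ≤ supNorm f := by
    refine le_trans (le_abs_self _) ?_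
    rw [← Real.norm_eq_abs]
    exact le_supNorm (fun z => by rw [Real.norm_eq_abs]; exact hf z) x
  have hfinal : κ * (⨆ z, u z) ≤ f x + Lalpha d α σ b u x + κ * ε := by
    have h1 : (⨆ z, u z) ≤ u x + ε := by linarith
    have hsolx := hsol x
    calc κ * (⨆ z, u z) ≤ κ * (u x + ε) := mul_le_mul_of_nonneg_left h1 hκ.le
      _ = κ * u x + κ * ε := by ring
      _ = f x + Lalpha d α σ b u x + κ * ε := by linarith
  have hmono : (ε + Φ * g₀) * J + Mb * g₀ ≤ (ε + Φ * G) * J + Mb * G := by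
    have h1 : Φ * g₀ ≤ Φ * G := mul_le_mul_of_nonneg_left hgrad hΦ
    have h2 : Mb * g₀ ≤ Mb * G := mul_le_mul_of_nonneg_left hgrad hMb
    nlinarith
  calc κ * (⨆ x, u x) ≤ f x + Lalpha d α σ b u x + κ * ε := hfinal
    _ ≤ supNorm f + (C₁ * I m) + ((ε + Φ * g₀) * J + Mb * g₀) + κ * ε := by linarith
    _ ≤ supNorm f + (δ/2) + ((ε + Φ * G) * J + Mb * G) + κ * ε :=
      add_le_add (add_le_add (add_le_add le_rfl hm.le) hmono) le_rfl
    _ ≤ supNorm f + δ := by linarith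

/-- maximum principle: if `u ∈ C_b^{1+γ}` with `1+γ > α` solves
`κu − L^α u = f` with `κ > 0` and `f` bounded continuous, then `κ‖u‖₀ ≤ ‖f‖₀`. -/
theorem statement9 (d : ℕ) (hd : 1 ≤ d) (α : ℝ) (hα : 1 < α ∧ α < 2)
    (σ : Ed d → Ed d → Ed d) (Cσ : ℝ) (φ : Ed d → ℝ) (hσ : SigmaHyp d σ Cσ φ)
    (b : Ed d → Ed d) (hbcont : Continuous b) (hbbdd : ∃ M, ∀ x, ‖b x‖ ≤ M)
    (γ : ℝ) (hγ : 0 < γ ∧ γ < 1) (hγα : α < 1 + γ)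
    (κ : ℝ) (hκ : 0 < κ)
    (f : Ed d → ℝ) (hfcont : Continuous f) (hfbdd : ∃ M, ∀ x, |f x| ≤ M)
    (u : Ed d → ℝ) (hu : ContDiff ℝ 1 u) (hubdd : ∃ M, ∀ x, |u x| ≤ M)
    (hu1 : ∃ M, ∀ x, ‖fderiv ℝ u x‖ ≤ M)
    (hu2 : ∃ M, 0 ≤ M ∧ ∀ x y, ‖fderiv ℝ u x - fderiv ℝ u y‖ ≤ M * ‖x - y‖ ^ γ)
    (hsol : ∀ x, κ * u x - Lalpha d α σ b u x = f x) :
    κ * supNorm u ≤ supNorm f := by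
  obtain ⟨hα1, hα2⟩ := hα
  obtain ⟨hγ0, hγ1⟩ := hγ
  obtain ⟨U, hU⟩ := hubdd
  obtain ⟨Mb, hb⟩ := hbbdd
  obtain ⟨Mf, hf⟩ := hfbdd
  obtain ⟨M₂, hM20, hu2'⟩ := hu2
  obtain ⟨Φ, hφup⟩ := hσ.phi_bdd
  have hΦ0 : 0 ≤ Φ := le_trans (hσ.phi_pos 0).le (hφup 0)
  have hσup : ∀ x y, ‖σ x y‖ ≤ Φ * ‖y‖ := fun x y =>
    le_trans (hσ.growth_upper x y) (mul_le_mul_of_nonneg_right (hφup x) (norm_nonneg _))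
  have hMb0 : 0 ≤ Mb := le_trans (norm_nonneg _) (hb 0)
  have hσc : ∀ x, Continuous (σ x) := fun x => (hσ.smooth x).continuous
  have h1 : κ * (⨆ x, u x) ≤ supNorm f :=
    key d hd hα1 hα2 hσc hΦ0 hσup hMb0 hb hγ0 hγ1 hγα hκ hf hu hU hM20 hu2' hsol
  have hu2n : ∀ x y, ‖fderiv ℝ (fun z => -u z) x - fderiv ℝ (fun z => -u z) y‖
      ≤ M₂ * ‖x - y‖ ^ γ := by
    intro x y
    rw [fderiv_fun_neg, fderiv_fun_neg,
      show (-fderiv ℝ u x) - -fderiv ℝ u y = -(fderiv ℝ u x - fderiv ℝ u y) from by abel,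
      norm_neg]
    exact hu2' x y
  have hsoln : ∀ x, κ * (-u x) - Lalpha d α σ b (fun z => -u z) x = -f x := by
    intro x
    rw [Lalpha_neg d α σ b u x]
    linarith [hsol x]
  have h2 : κ * (⨆ x, -u x) ≤ supNorm (fun x => -f x) :=
    key d hd hα1 hα2 hσc hΦ0 hσup hMb0 hb hγ0 hγ1 hγα hκ
      (fun x => by simp only [abs_neg]; exact hf x) hu.neg
      (fun z => by simp only [abs_neg]; exact hU z) hM20 hu2n hsoln
  have hsn : supNorm (fun x => -f x) = supNorm f := by
    unfold supNorm
    simp only [norm_neg]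
  rw [hsn] at h2
  have hbddA : BddAbove (Set.range u) :=
    ⟨U, by rintro z ⟨x, rfl⟩; exact (le_abs_self _).trans (hU x)⟩
  have hbddB : BddAbove (Set.range fun z => -u z) :=
    ⟨U, by rintro z ⟨x, rfl⟩; exact (le_abs_self _).trans (by simp only [abs_neg]; exact hU x)⟩
  have h3 : supNorm u ≤ max (⨆ z, u z) (⨆ z, -u z) := by
    unfold supNorm
    refine ciSup_le fun x => ?_
    rw [Real.norm_eq_abs, abs_eq_max_neg]
    exact max_le_max (le_ciSup hbddA x) (le_ciSup hbddB x)
  calc κ * supNorm u ≤ κ * max (⨆ z, u z) (⨆ z, -u z) := mul_le_mul_of_nonneg_left h3 hκ.le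
    _ = max (κ * ⨆ z, u z) (κ * ⨆ z, -u z) := mul_max_of_nonneg _ _ hκ.le
    _ ≤ supNorm f := max_le h1 h2
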